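/- Let f : C → C be a geodesic-preserving bijection of the flat cylinder C such that f(π(0,0)) = π(0,0), f(π(0,1)) = π(0,1), and f maps the vertical geodesic v = π({0} × ℝ) onto itself. Then f fixes every point of v of dyadic rational height: for all n ∈ ℤ and m ∈ ℕ, f(π(0, n / 2^m)) = π(0, n / 2^m). -/

import Mathlib

/-- The flat cylinder `C = (ℝ/ℤ) × ℝ`. -/
abbrev Cyl : Type := AddCircle (1 : ℝ) × ℝ

/-- The quotient map `π : ℝ × ℝ → C`, `π(x, y) = (↑x, y)`. -/
noncomputable def cylπ (p : ℝ × ℝ) : Cyl := ((p.1 : AddCircle (1 : ℝ)), p.2)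

/-- An affine line in `ℝ²`. -/
def IsLine (L : Set (ℝ × ℝ)) : Prop :=
  ∃ p v : ℝ × ℝ, v ≠ 0 ∧ L = {x | ∃ t : ℝ, x = p + t • v}

/-- A geodesic of the flat cylinder is the image under `π` of an affine line. -/
def IsCylGeodesic (G : Set Cyl) : Prop :=
  ∃ L : Set (ℝ × ℝ), IsLine L ∧ G = cylπ '' L

noncomputable section
namespace CylAux
open Set

abbrev AC := AddCircle (1:ℝ)

lemma coe_int_zero (x : ℝ) : ((x : AC) = 0) ↔ ∃ k : ℤ, x = k := by
  rw [AddCircle.coe_eq_zero_iff]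
  constructor
  · rintro ⟨n, hn⟩; exact ⟨n, by simpa using hn.symm⟩
  · rintro ⟨k, hk⟩; exact ⟨k, by simp [hk]⟩

lemma coe_eq_coe (x y : ℝ) : ((x:AC) = (y:AC)) ↔ ∃ k : ℤ, y = x + k := by
  constructor
  · intro h
    have : ((y - x : ℝ) : AC) = 0 := by
      rw [AddCircle.coe_sub, sub_eq_zero]; exact h.symm
    obtain ⟨k, hk⟩ := (coe_int_zero _).mp this
    exact ⟨k, by linarith⟩
  · rintro ⟨k, rfl⟩
    rw [AddCircle.coe_add]
    have : ((k:ℝ):AC) = 0 := (coe_int_zero _).mpr ⟨k, rfl⟩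
    rw [this, add_zero]

lemma half_not_int : ¬ ∃ k : ℤ, (1/2 : ℝ) = k := by
  rintro ⟨k, hk⟩
  have h2 : (2*k : ℝ) = 1 := by rw [← hk]; ring
  have : (2*k : ℤ) = 1 := by exact_mod_cast h2
  omega

lemma third_not_int : ¬ ∃ k : ℤ, (1/3 : ℝ) = k := by
  rintro ⟨k, hk⟩
  have h2 : (3*k : ℝ) = 1 := by rw [← hk]; ring
  have : (3*k : ℤ) = 1 := by exact_mod_cast h2
  omega

def lineOf (y s : ℝ) : Set (ℝ × ℝ) := {p | ∃ x : ℝ, p = (x, s*x + y)}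
set_option linter.unusedSectionVars false

def Spi (y s : ℝ) : Set Cyl := cylπ '' lineOf y s

def Vset : Set Cyl := cylπ '' (({0} : Set ℝ) ×ˢ (Set.univ : Set ℝ))

lemma mem_Spi {q : Cyl} {y s : ℝ} : q ∈ Spi y s ↔ ∃ x : ℝ, q = ((x:AC), s*x + y) := by
  constructor
  · rintro ⟨p, ⟨x, rfl⟩, rfl⟩; exact ⟨x, rfl⟩
  · rintro ⟨x, rfl⟩; exact ⟨(x, s*x+y), ⟨x, rfl⟩, rfl⟩

lemma mem_Vset {q : Cyl} : q ∈ Vset ↔ ∃ r : ℝ, q = (((0:ℝ):AC), r) := by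
  constructor
  · rintro ⟨p, ⟨h1, _⟩, rfl⟩
    exact ⟨p.2, by simp [cylπ, show p.1 = 0 from h1]⟩
  · rintro ⟨r, rfl⟩; exact ⟨(0, r), ⟨rfl, trivial⟩, rfl⟩

lemma vpt_mem_Vset (r : ℝ) : (((0:ℝ):AC), r) ∈ Vset := mem_Vset.mpr ⟨r, rfl⟩

lemma isLine_lineOf (y s : ℝ) : IsLine (lineOf y s) := by
  refine ⟨(0, y), (1, s), ?_, ?_⟩
  · intro h
    have := congrArg Prod.fst h
    simp at this
  · ext p
    constructor
    · rintro ⟨x, rfl⟩; exact ⟨x, by simp [Prod.ext_iff]; ring⟩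
    · rintro ⟨t, rfl⟩; exact ⟨t, by simp [Prod.ext_iff]; ring⟩

lemma isGeodesic_Spi (y s : ℝ) : IsCylGeodesic (Spi y s) :=
  ⟨lineOf y s, isLine_lineOf y s, rfl⟩

lemma Spi_shift (y s : ℝ) (k : ℤ) : Spi (y + s*k) s = Spi y s := by
  ext q
  simp only [mem_Spi]
  constructor
  · rintro ⟨x, rfl⟩
    refine ⟨x + k, ?_⟩
    have : ((x:ℝ):AC) = ((x + k : ℝ):AC) := (coe_eq_coe _ _).mpr ⟨k, rfl⟩
    rw [Prod.ext_iff]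
    exact ⟨this, by push_cast; ring⟩
  · rintro ⟨x, rfl⟩
    refine ⟨x - k, ?_⟩
    have : ((x:ℝ):AC) = ((x - k : ℝ):AC) := (coe_eq_coe _ _).mpr ⟨-k, by push_cast; ring⟩
    rw [Prod.ext_iff]
    exact ⟨this, by push_cast; ring⟩

/-- classification: every geodesic is a vertical or a `Spi`. -/
lemma geodesic_classify {G : Set Cyl} (h : IsCylGeodesic G) :
    (∃ θ : AC, G = {q : Cyl | q.1 = θ}) ∨ (∃ c s : ℝ, G = Spi c s) := by
  obtain ⟨L, ⟨p, w, hw, rfl⟩, rfl⟩ := h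
  by_cases hw1 : w.1 = 0
  · left
    refine ⟨(p.1 : AC), ?_⟩
    have hw2 : w.2 ≠ 0 := by
      intro h2; exact hw (Prod.ext hw1 h2)
    ext q
    constructor
    · rintro ⟨x, ⟨t, rfl⟩, rfl⟩
      simp [cylπ, hw1]
    · intro hq
      refine ⟨(p.1, q.2), ⟨(q.2 - p.2)/w.2, ?_⟩, ?_⟩
      · rw [Prod.ext_iff]
        constructor
        · simp [hw1]
        · simp [hw2]
      · rw [Prod.ext_iff]
        exact ⟨hq.symm, rfl⟩
  · right
    refine ⟨p.2 - (w.2/w.1) * p.1, w.2/w.1, ?_⟩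
    ext q
    simp only [mem_Spi]
    constructor
    · rintro ⟨x, ⟨t, rfl⟩, rfl⟩
      refine ⟨p.1 + t*w.1, ?_⟩
      rw [Prod.ext_iff]
      constructor
      · simp [cylπ]
      · simp [cylπ]
        field_simp
        ring
    · rintro ⟨x, rfl⟩
      refine ⟨(x, (w.2/w.1)*x + (p.2 - w.2/w.1*p.1)), ⟨(x - p.1)/w.1, ?_⟩, rfl⟩
      rw [Prod.ext_iff]
      constructor
      · simp; field_simp; ring
      · simp; field_simp; ring
lemma Spi_inter_V (y s : ℝ) :
    Spi y s ∩ Vset = {q : Cyl | ∃ k : ℤ, q = (((0:ℝ):AC), y + s*k)} := by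
  ext q
  constructor
  · rintro ⟨hq, hqv⟩
    obtain ⟨x, rfl⟩ := mem_Spi.mp hq
    obtain ⟨r, hr⟩ := mem_Vset.mp hqv
    have h1 : ((x:ℝ):AC) = ((0:ℝ):AC) := congrArg Prod.fst hr
    obtain ⟨k, hk⟩ := (coe_eq_coe _ _).mp h1.symm
    refine ⟨k, ?_⟩
    rw [Prod.ext_iff]
    refine ⟨h1, ?_⟩
    simp only []
    rw [show x = (k:ℝ) by linarith]
    ring
  · rintro ⟨k, rfl⟩
    constructor
    · rw [mem_Spi]
      refine ⟨(k:ℝ), ?_⟩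
      rw [Prod.ext_iff]
      constructor
      · show ((0:ℝ):AC) = ((k:ℝ):AC)
        rw [coe_eq_coe]; exact ⟨k, by push_cast; ring⟩
      · show y + s*k = s*(k:ℝ) + y
        ring
    · exact vpt_mem_Vset _

section Main

variable {f : Cyl → Cyl}

/-- the height map induced on the second coordinate -/
def gmap (f : Cyl → Cyl) (r : ℝ) : ℝ := (f (((0:ℝ):AC), r)).2

variable (hbij : Function.Bijective f)
variable (hgeo : ∀ G : Set Cyl, IsCylGeodesic G → IsCylGeodesic (f '' G))
variable (hv : f '' Vset = Vset)

include hbij hv in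
lemma f_vpt (r : ℝ) : f (((0:ℝ):AC), r) = (((0:ℝ):AC), gmap f r) := by
  have h1 : f (((0:ℝ):AC), r) ∈ Vset := by
    rw [← hv]; exact ⟨_, vpt_mem_Vset r, rfl⟩
  obtain ⟨r', hr'⟩ := mem_Vset.mp h1
  rw [hr']
  rw [show gmap f r = r' by rw [gmap, hr']]

include hbij in
lemma img_inter (S T : Set Cyl) : f '' (S ∩ T) = f '' S ∩ f '' T :=
  Set.image_inter hbij.injective

include hbij in
lemma img_inj {S T : Set Cyl} (h : f '' S = f '' T) : S = T :=
  Set.image_injective.mpr hbij.injective h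

include hbij hgeo hv in
lemma circle_image (r : ℝ) : f '' Spi r 0 = Spi (gmap f r) 0 := by
  have hG := hgeo _ (isGeodesic_Spi r 0)
  have htr : Spi r 0 ∩ Vset = {(((0:ℝ):AC), r)} := by
    rw [Spi_inter_V]
    ext q
    constructor
    · rintro ⟨k, rfl⟩; simp
    · rintro rfl; exact ⟨0, by simp⟩
  have htr' : f '' Spi r 0 ∩ Vset = {(((0:ℝ):AC), gmap f r)} := by
    rw [← hv, ← img_inter hbij, htr]
    rw [Set.image_singleton, f_vpt hbij hv]
  rcases geodesic_classify hG with ⟨θ, hθ⟩ | ⟨c, s, hcs⟩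
  · exfalso
    by_cases h0 : θ = ((0:ℝ):AC)
    · -- vertical through 0 : intersection with V is all of V
      have h00 : (((0:ℝ):AC), (0:ℝ)) ∈ f '' Spi r 0 ∩ Vset := by
        constructor
        · rw [hθ]; exact h0.symm
        · exact vpt_mem_Vset 0
      have h01 : (((0:ℝ):AC), (1:ℝ)) ∈ f '' Spi r 0 ∩ Vset := by
        constructor
        · rw [hθ]; exact h0.symm
        · exact vpt_mem_Vset 1
      rw [htr'] at h00 h01
      have := congrArg Prod.snd (h00.trans h01.symm)
      simp at this
    · have h00 : (((0:ℝ):AC), gmap f r) ∈ f '' Spi r 0 ∩ Vset := by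
        rw [htr']; rfl
      rw [hθ] at h00
      exact h0 (h00.1).symm
  · have hs : s = 0 := by
      by_contra hs
      have h1 : (((0:ℝ):AC), c) ∈ f '' Spi r 0 ∩ Vset := by
        rw [hcs, Spi_inter_V]
        exact ⟨0, by simp [Prod.ext_iff]⟩
      have h2 : (((0:ℝ):AC), c + s) ∈ f '' Spi r 0 ∩ Vset := by
        rw [hcs, Spi_inter_V]
        exact ⟨1, by simp [Prod.ext_iff]⟩
      rw [htr'] at h1 h2
      have := congrArg Prod.snd (h1.trans h2.symm)
      simp at this
      exact hs (by linarith)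
    subst hs
    have hc : c = gmap f r := by
      have h1 : (((0:ℝ):AC), c) ∈ f '' Spi r 0 ∩ Vset := by
        rw [hcs, Spi_inter_V]
        exact ⟨0, by simp [Prod.ext_iff]⟩
      rw [htr'] at h1
      exact congrArg Prod.snd h1
    rw [hcs, hc]

include hbij hgeo hv in
lemma height_eq (q : Cyl) : (f q).2 = gmap f q.2 := by
  obtain ⟨x, hx⟩ := QuotientAddGroup.mk_surjective q.1
  have hq : q ∈ Spi q.2 0 := mem_Spi.mpr ⟨x, by
    rw [Prod.ext_iff]; exact ⟨hx.symm, by simp⟩⟩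
  have : f q ∈ Spi (gmap f q.2) 0 := by
    rw [← circle_image hbij hgeo hv]
    exact ⟨q, hq, rfl⟩
  obtain ⟨x', hx'⟩ := mem_Spi.mp this
  rw [hx']
  simp

include hbij hv in
lemma gmap_inj : Function.Injective (gmap f) := by
  intro a b hab
  have h1 : f (((0:ℝ):AC), a) = f (((0:ℝ):AC), b) := by
    rw [f_vpt hbij hv a, f_vpt hbij hv b, hab]
  exact congrArg Prod.snd (hbij.injective h1)

lemma Vset_eq : Vset = {q : Cyl | q.1 = ((0:ℝ):AC)} := by
  ext q
  rw [mem_Vset]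
  constructor
  · rintro ⟨r, rfl⟩; rfl
  · intro h
    exact ⟨q.2, by rw [Prod.ext_iff]; exact ⟨h, rfl⟩⟩

lemma vpt_eq_iff {a b : ℝ} : ((((0:ℝ):AC), a) : Cyl) = (((0:ℝ):AC), b) ↔ a = b := by
  constructor
  · intro h; exact congrArg Prod.snd h
  · intro h; rw [h]

include hbij hgeo hv in
lemma spiral_image (y s : ℝ) (hs : s ≠ 0) :
    ∃ σ : ℝ, σ ≠ 0 ∧ f '' Spi y s = Spi (gmap f y) σ := by
  have hG := hgeo _ (isGeodesic_Spi y s)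
  have hm : ∀ k : ℤ, (((0:ℝ):AC), gmap f (y + s*k)) ∈ f '' Spi y s ∩ Vset := by
    intro k
    rw [← hv, ← img_inter hbij]
    refine ⟨(((0:ℝ):AC), y + s*k), ?_, f_vpt hbij hv _⟩
    rw [Spi_inter_V]
    exact ⟨k, rfl⟩
  have hneq : gmap f y ≠ gmap f (y + s*1) := by
    intro h
    have := gmap_inj hbij hv h
    simp at this
    exact hs this
  rcases geodesic_classify hG with ⟨θ, hθ⟩ | ⟨c, σ, hcs⟩
  · exfalso
    have h0 := (hm 0).1
    rw [hθ] at h0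
    have hθ0 : θ = ((0:ℝ):AC) := h0.symm
    have hVeq : f '' Spi y s = Vset := by
      rw [hθ, hθ0, Vset_eq]
    have hSV : Spi y s = Vset := img_inj hbij (by rw [hVeq, hv])
    have hhalf : (((1/2 : ℝ):AC), s*(1/2 : ℝ) + y) ∈ Vset := by
      rw [← hSV]; exact mem_Spi.mpr ⟨(1/2 : ℝ), rfl⟩
    rw [Vset_eq] at hhalf
    obtain ⟨k, hk⟩ := (coe_eq_coe _ _).mp (hhalf : ((1/2:ℝ):AC) = ((0:ℝ):AC))
    exact half_not_int ⟨-k, by push_cast; linarith⟩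
  · have hσ : σ ≠ 0 := by
      intro h
      subst h
      have h0 := hm 0
      have h1 := hm 1
      rw [hcs, Spi_inter_V] at h0 h1
      obtain ⟨k0, hk0⟩ := h0
      obtain ⟨k1, hk1⟩ := h1
      apply hneq
      have e0 := vpt_eq_iff.mp hk0
      have e1 := vpt_eq_iff.mp hk1
      simp at e0 e1
      push_cast
      rw [mul_one, e0, e1]
    have h00 := (hm 0).1
    rw [hcs, mem_Spi] at h00
    rename' h00 => h0
    obtain ⟨x, hx⟩ := h0
    have hx1 : ((0:ℝ):AC) = ((x:ℝ):AC) := congrArg Prod.fst hx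
    obtain ⟨k, hk⟩ := (coe_eq_coe _ _).mp hx1
    have hx2 := congrArg Prod.snd hx
    simp only [] at hx2
    refine ⟨σ, hσ, ?_⟩
    rw [hcs, ← Spi_shift c σ k]
    congr 1
    rw [hk] at hx2
    simp at hx2
    rw [gmap] at hx2 ⊢
    rw [hx2]
    ring
lemma mem_Spi_vpt {y s r : ℝ} : ((((0:ℝ):AC), r) : Cyl) ∈ Spi y s ↔ ∃ k : ℤ, r = y + s*k := by
  constructor
  · intro h
    obtain ⟨x, hx⟩ := mem_Spi.mp h
    have h1 : ((0:ℝ):AC) = ((x:ℝ):AC) := congrArg Prod.fst hx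
    obtain ⟨k, hk⟩ := (coe_eq_coe _ _).mp h1
    have h2 : r = s*x + y := congrArg Prod.snd hx
    exact ⟨k, by rw [h2, show x = (k:ℝ) by linarith]; ring⟩
  · rintro ⟨k, rfl⟩
    refine mem_Spi.mpr ⟨(k:ℝ), ?_⟩
    rw [Prod.ext_iff]
    constructor
    · show ((0:ℝ):AC) = ((k:ℝ):AC)
      rw [coe_eq_coe]; exact ⟨k, by ring⟩
    · show y + s*k = s*(k:ℝ) + y
      ring

lemma vmem_of_int {x r : ℝ} (k : ℤ) (h : x = k) : (((x:AC), r) : Cyl) ∈ Vset := by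
  rw [Vset_eq]
  show (x:AC) = ((0:ℝ):AC)
  rw [coe_eq_coe]
  exact ⟨-k, by rw [h]; push_cast; ring⟩

lemma inter_double_sub_V (y e : ℝ) (he : e ≠ 0) : Spi y e ∩ Spi y (2*e) ⊆ Vset := by
  rintro q ⟨hq1, hq2⟩
  obtain ⟨x1, rfl⟩ := mem_Spi.mp hq1
  obtain ⟨x2, hx2⟩ := mem_Spi.mp hq2
  have hfst : ((x1:ℝ):AC) = ((x2:ℝ):AC) := congrArg Prod.fst hx2
  obtain ⟨k, hk⟩ := (coe_eq_coe _ _).mp hfst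
  have hsnd : e*x1 + y = 2*e*x2 + y := congrArg Prod.snd hx2
  have hx1 : x1 = 2*x2 := by
    have := mul_left_cancel₀ he (by linarith : e*x1 = e*(2*x2))
    linarith
  exact vmem_of_int (-2*k) (by push_cast; linarith)

include hbij hgeo hv in
lemma step_down (y e : ℝ) (he : e ≠ 0) (hy : gmap f y = y)
    (h2 : f '' Spi y (2*e) = Spi y (2*e)) : f '' Spi y e = Spi y e := by
  obtain ⟨σ, hσ, himg⟩ := spiral_image hbij hgeo hv y e he
  rw [hy] at himg
  have hne : σ ≠ 2*e := by
    intro h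
    subst h
    have hSS : Spi y e = Spi y (2*e) := img_inj hbij (by rw [himg, h2])
    have hmem : ((((0:ℝ):AC), y + e) : Cyl) ∈ Spi y (2*e) := by
      rw [← hSS]
      exact mem_Spi_vpt.mpr ⟨1, by push_cast; ring⟩
    obtain ⟨k, hk⟩ := mem_Spi_vpt.mp hmem
    have : e = 2*e*k := by linarith
    have h1 : (1:ℝ) = 2*k := mul_left_cancel₀ he (by linarith)
    exact half_not_int ⟨k, by linarith⟩
  -- the crossing point gives an integer u
  set x1 : ℝ := 2*e/(σ - 2*e) with hx1def
  have hd : σ - 2*e ≠ 0 := sub_ne_zero.mpr hne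
  have hq1 : ((((x1:ℝ):AC), σ*x1 + y) : Cyl) ∈ Spi y σ ∩ Spi y (2*e) := by
    constructor
    · exact mem_Spi.mpr ⟨x1, rfl⟩
    · refine mem_Spi.mpr ⟨x1 + 1, ?_⟩
      rw [Prod.ext_iff]
      constructor
      · show ((x1:ℝ):AC) = ((x1 + 1 : ℝ):AC)
        rw [coe_eq_coe]; exact ⟨1, by push_cast; ring⟩
      · show σ*x1 + y = 2*e*(x1+1) + y
        have : x1*(σ - 2*e) = 2*e := by
          rw [hx1def]; field_simp
        nlinarith [this]
  have hq1V : ((((x1:ℝ):AC), σ*x1 + y) : Cyl) ∈ Vset := by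
    have hXV : Spi y σ ∩ Spi y (2*e) ⊆ Vset := by
      rw [← himg, ← h2, ← img_inter hbij, ← hv]
      exact Set.image_mono (inter_double_sub_V y e he)
    exact hXV hq1
  rw [Vset_eq] at hq1V
  obtain ⟨j, hj⟩ := (coe_eq_coe _ _).mp (hq1V : ((x1:ℝ):AC) = ((0:ℝ):AC))
  have hu : x1 = (-j : ℤ) := by push_cast; linarith
  -- trace inclusion gives integer t with 2e = σ t
  have htr : Spi y (2*e) ∩ Vset ⊆ Spi y σ ∩ Vset := by
    have hsub : Spi y (2*e) ∩ Vset ⊆ Spi y e ∩ Vset := by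
      rintro q ⟨hq, hqv⟩
      refine ⟨?_, hqv⟩
      obtain ⟨r, rfl⟩ := mem_Vset.mp hqv
      obtain ⟨k, hk⟩ := mem_Spi_vpt.mp hq
      exact mem_Spi_vpt.mpr ⟨2*k, by rw [hk]; push_cast; ring⟩
    calc Spi y (2*e) ∩ Vset = f '' (Spi y (2*e) ∩ Vset) := by
          rw [img_inter hbij, h2, hv]
      _ ⊆ f '' (Spi y e ∩ Vset) := Set.image_mono hsub
      _ = Spi y σ ∩ Vset := by rw [img_inter hbij, himg, hv]
  have hmem2 : ((((0:ℝ):AC), y + 2*e) : Cyl) ∈ Spi y σ := by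
    have : ((((0:ℝ):AC), y + 2*e) : Cyl) ∈ Spi y (2*e) ∩ Vset := by
      refine ⟨mem_Spi_vpt.mpr ⟨1, by push_cast; ring⟩, vpt_mem_Vset _⟩
    exact (htr this).1
  obtain ⟨t, ht⟩ := mem_Spi_vpt.mp hmem2
  have ht' : 2*e = σ*t := by linarith
  -- integer arithmetic
  set u : ℤ := -j with hudef
  have hreal : (u:ℝ)*(σ - 2*e) = 2*e := by
    rw [← hu, hx1def]; field_simp
  have hkey : ((u - u*t - t : ℤ) : ℝ) = 0 := by
    push_cast
    have : (u:ℝ)*σ - (u:ℝ)*(σ*t) = σ*t := by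
      calc (u:ℝ)*σ - (u:ℝ)*(σ*t) = (u:ℝ)*(σ - 2*e) := by rw [← ht']; ring
        _ = 2*e := hreal
        _ = σ*t := ht'
    have hσ' := hσ
    have : σ*((u:ℝ) - (u:ℝ)*t - t) = 0 := by linarith [this]
    rcases mul_eq_zero.mp this with h | h
    · exact absurd h hσ'
    · linarith
  have hkeyZ : u - u*t - t = 0 := by exact_mod_cast hkey
  have hunit : (1 - t)*(u + 1) = 1 := by linear_combination hkeyZ
  have ht2 : t = 2 := by
    have h1 := Int.isUnit_iff.mp (IsUnit.of_mul_eq_one _ hunit)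
    have ht0 : t ≠ 0 := by
      intro h
      rw [h] at ht'
      push_cast at ht'
      have he0 : e = 0 := by nlinarith [ht']
      exact he he0
    have ht1 : t ≠ 1 := by
      intro h
      rw [h] at ht'
      push_cast at ht'
      exact hne (by nlinarith [ht'])
    omega
  have : σ = e := by
    rw [ht2] at ht'
    push_cast at ht'
    have : 2*e = 2*σ := by linarith
    linarith
  rw [himg, this]

include hbij hgeo hv in
lemma step_up (y e : ℝ) (he : e ≠ 0) (hy : gmap f y = y)
    (h1 : f '' Spi y e = Spi y e) : f '' Spi y (2*e) = Spi y (2*e) := by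
  have h2e : (2:ℝ)*e ≠ 0 := mul_ne_zero two_ne_zero he
  obtain ⟨σ, hσ, himg⟩ := spiral_image hbij hgeo hv y (2*e) h2e
  rw [hy] at himg
  have hne : σ ≠ e := by
    intro h
    rw [h] at himg
    have hSS : Spi y (2*e) = Spi y e := img_inj hbij (by rw [himg, h1])
    have hmem : ((((0:ℝ):AC), y + e) : Cyl) ∈ Spi y (2*e) := by
      rw [hSS]
      exact mem_Spi_vpt.mpr ⟨1, by push_cast; ring⟩
    obtain ⟨k, hk⟩ := mem_Spi_vpt.mp hmem
    have h1' : (1:ℝ) = 2*k := mul_left_cancel₀ he (by linarith)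
    exact half_not_int ⟨k, by linarith⟩
  set x1 : ℝ := e/(σ - e) with hx1def
  have hd : σ - e ≠ 0 := sub_ne_zero.mpr hne
  have hq1 : ((((x1:ℝ):AC), σ*x1 + y) : Cyl) ∈ Spi y σ ∩ Spi y e := by
    constructor
    · exact mem_Spi.mpr ⟨x1, rfl⟩
    · refine mem_Spi.mpr ⟨x1 + 1, ?_⟩
      rw [Prod.ext_iff]
      constructor
      · show ((x1:ℝ):AC) = ((x1 + 1 : ℝ):AC)
        rw [coe_eq_coe]; exact ⟨1, by push_cast; ring⟩
      · show σ*x1 + y = e*(x1+1) + y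
        have : x1*(σ - e) = e := by
          rw [hx1def]; field_simp
        nlinarith [this]
  have hq1V : ((((x1:ℝ):AC), σ*x1 + y) : Cyl) ∈ Vset := by
    have hXV : Spi y σ ∩ Spi y e ⊆ Vset := by
      rw [← himg, ← h1, ← img_inter hbij, ← hv]
      refine Set.image_mono ?_
      intro q hq
      exact inter_double_sub_V y e he ⟨hq.2, hq.1⟩
    exact hXV hq1
  rw [Vset_eq] at hq1V
  obtain ⟨j, hj⟩ := (coe_eq_coe _ _).mp (hq1V : ((x1:ℝ):AC) = ((0:ℝ):AC))
  have hu : x1 = (-j : ℤ) := by push_cast; linarith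
  have htr : Spi y σ ∩ Vset ⊆ Spi y e ∩ Vset := by
    have hsub : Spi y (2*e) ∩ Vset ⊆ Spi y e ∩ Vset := by
      rintro q ⟨hq, hqv⟩
      refine ⟨?_, hqv⟩
      obtain ⟨r, rfl⟩ := mem_Vset.mp hqv
      obtain ⟨k, hk⟩ := mem_Spi_vpt.mp hq
      exact mem_Spi_vpt.mpr ⟨2*k, by rw [hk]; push_cast; ring⟩
    calc Spi y σ ∩ Vset = f '' (Spi y (2*e) ∩ Vset) := by
          rw [img_inter hbij, himg, hv]
      _ ⊆ f '' (Spi y e ∩ Vset) := Set.image_mono hsub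
      _ = Spi y e ∩ Vset := by rw [img_inter hbij, h1, hv]
  have hmem2 : ((((0:ℝ):AC), y + σ) : Cyl) ∈ Spi y e := by
    have : ((((0:ℝ):AC), y + σ) : Cyl) ∈ Spi y σ ∩ Vset := by
      refine ⟨mem_Spi_vpt.mpr ⟨1, by push_cast; ring⟩, vpt_mem_Vset _⟩
    exact (htr this).1
  obtain ⟨t, ht⟩ := mem_Spi_vpt.mp hmem2
  have ht' : σ = e*t := by linarith
  set u : ℤ := -j with hudef
  have hreal : (u:ℝ)*(σ - e) = e := by
    rw [← hu, hx1def]; field_simp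
  have hkey : ((u*t - u - 1 : ℤ) : ℝ) = 0 := by
    push_cast
    have he2 : e*((u:ℝ)*t - u - 1) = 0 := by
      calc e*((u:ℝ)*t - u - 1) = (u:ℝ)*(e*t - e) - e := by ring
        _ = (u:ℝ)*(σ - e) - e := by rw [← ht']
        _ = 0 := by rw [hreal]; ring
    rcases mul_eq_zero.mp he2 with h | h
    · exact absurd h he
    · linarith
  have hkeyZ : u*t - u - 1 = 0 := by exact_mod_cast hkey
  have hunit : u*(t - 1) = 1 := by linear_combination hkeyZ
  have ht2 : t = 2 := by
    have h1' := Int.isUnit_iff.mp (IsUnit.of_mul_eq_one _ (by linarith [hunit] : (t-1)*u = 1))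
    have ht0 : t ≠ 0 := by
      intro h
      rw [h] at ht'
      push_cast at ht'
      exact hσ (by nlinarith [ht'])
    omega
  have hσe : σ = 2*e := by
    rw [ht2] at ht'
    push_cast at ht'
    linarith
  rw [himg, hσe]

variable (h0 : f (cylπ (0, 0)) = cylπ (0, 0))
variable (h1 : f (cylπ (0, 1)) = cylπ (0, 1))

include hbij hv h0 in
lemma g_zero : gmap f 0 = 0 := by
  have : f (((0:ℝ):AC), (0:ℝ)) = (((0:ℝ):AC), (0:ℝ)) := h0
  rw [gmap, this]

include hbij hv h1 in
lemma g_one : gmap f 1 = 1 := by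
  have : f (((0:ℝ):AC), (1:ℝ)) = (((0:ℝ):AC), (1:ℝ)) := h1
  rw [gmap, this]

include hbij hgeo hv in
lemma chain_up (y e : ℝ) (he : e ≠ 0) (hy : gmap f y = y)
    (h : f '' Spi y e = Spi y e) : ∀ n : ℕ, f '' Spi y (2^n * e) = Spi y (2^n * e) := by
  intro n
  induction n with
  | zero => simpa using h
  | succ n ih =>
    have hne : (2:ℝ)^n * e ≠ 0 := mul_ne_zero (pow_ne_zero _ two_ne_zero) he
    have := step_up hbij hgeo hv y (2^n*e) hne hy ih
    rw [show (2:ℝ)^(n+1)*e = 2*(2^n*e) by ring]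
    exact this

include hbij hgeo hv in
lemma chain_down (y e : ℝ) (he : e ≠ 0) (hy : gmap f y = y)
    (h : f '' Spi y e = Spi y e) : ∀ n : ℕ, f '' Spi y (e/2^n) = Spi y (e/2^n) := by
  intro n
  induction n with
  | zero => simpa using h
  | succ n ih =>
    have hne : e/(2:ℝ)^(n+1) ≠ 0 := div_ne_zero he (pow_ne_zero _ two_ne_zero)
    have := step_down hbij hgeo hv y (e/2^(n+1)) hne hy (by
      rw [show 2*(e/(2:ℝ)^(n+1)) = e/2^n by field_simp; ring]
      exact ih)
    exact this

variable (hA : f '' Spi 0 1 = Spi 0 1)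

include hbij hgeo hv hA h0 in
lemma B_fixed : f '' Spi 0 (-1) = Spi 0 (-1) := by
  obtain ⟨σ, hσ, himg⟩ := spiral_image hbij hgeo hv 0 (-1) (by norm_num)
  rw [g_zero hbij hv h0] at himg
  have htreq : Spi 0 (-1) ∩ Vset = Spi 0 1 ∩ Vset := by
    rw [Spi_inter_V, Spi_inter_V]
    ext q
    constructor
    · rintro ⟨k, rfl⟩; exact ⟨-k, by push_cast; ring_nf⟩
    · rintro ⟨k, rfl⟩; exact ⟨-k, by push_cast; ring_nf⟩
  have htr : Spi 0 σ ∩ Vset = Spi 0 1 ∩ Vset := by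
    calc Spi 0 σ ∩ Vset = f '' (Spi 0 (-1) ∩ Vset) := by
          rw [img_inter hbij, himg, hv]
      _ = f '' (Spi 0 1 ∩ Vset) := by rw [htreq]
      _ = Spi 0 1 ∩ Vset := by rw [img_inter hbij, hA, hv]
  have hm1 : ((((0:ℝ):AC), (0:ℝ) + σ*(1:ℤ)) : Cyl) ∈ Spi 0 1 ∩ Vset := by
    rw [← htr]
    exact ⟨mem_Spi_vpt.mpr ⟨1, rfl⟩, vpt_mem_Vset _⟩
  obtain ⟨k, hk⟩ := mem_Spi_vpt.mp hm1.1
  have hσk : σ = (k:ℝ) := by push_cast at hk; linarith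
  have hm2 : ((((0:ℝ):AC), (0:ℝ) + 1*(1:ℤ)) : Cyl) ∈ Spi 0 σ ∩ Vset := by
    rw [htr]
    exact ⟨mem_Spi_vpt.mpr ⟨1, rfl⟩, vpt_mem_Vset _⟩
  obtain ⟨j, hj⟩ := mem_Spi_vpt.mp hm2.1
  have hσj : (1:ℝ) = σ*j := by push_cast at hj; linarith
  have hkj : k*j = 1 := by
    have : ((k*j : ℤ):ℝ) = 1 := by push_cast; rw [← hσk]; linarith
    exact_mod_cast this
  have hk1 : k = 1 ∨ k = -1 := Int.isUnit_iff.mp (IsUnit.of_mul_eq_one _ hkj)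
  rcases hk1 with hk1 | hk1
  · exfalso
    rw [hk1] at hσk
    push_cast at hσk
    rw [hσk] at himg
    have hSS : Spi 0 (-1) = Spi 0 1 := img_inj hbij (by rw [himg, hA])
    have hmem : ((((1/3:ℝ)):AC), (-(1/3):ℝ)) ∈ Spi 0 1 := by
      rw [← hSS]
      exact mem_Spi.mpr ⟨1/3, by rw [Prod.ext_iff]; exact ⟨rfl, by norm_num⟩⟩
    obtain ⟨x, hx⟩ := mem_Spi.mp hmem
    have hfst : ((1/3:ℝ):AC) = ((x:ℝ):AC) := congrArg Prod.fst hx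
    have hsnd : (-(1/3):ℝ) = 1*x + 0 := congrArg Prod.snd hx
    obtain ⟨kk, hkk⟩ := (coe_eq_coe _ _).mp hfst
    have : (3*kk : ℝ) = -2 := by push_cast; linarith
    have : (3*kk : ℤ) = -2 := by exact_mod_cast this
    omega
  · rw [hk1] at hσk
    push_cast at hσk
    rw [himg, hσk]

include hbij hgeo hv h0 hA in
lemma dyadic_spirals (y : ℝ) (hy : gmap f y = y) (m : ℕ) (nn : ℤ) (hyv : y * 2^m = nn) (b : ℕ) :
    f '' Spi y ((2:ℝ)^b) = Spi y ((2:ℝ)^b) ∧ f '' Spi y (-(2:ℝ)^b) = Spi y (-(2:ℝ)^b) := by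
  have hg0 : gmap f 0 = 0 := g_zero hbij hv h0
  have hyval : y = (nn:ℝ)/2^m := by
    field_simp at hyv ⊢
    linarith
  constructor
  · have hf0 : f '' Spi 0 ((1:ℝ)/2^m) = Spi 0 ((1:ℝ)/2^m) := by
      have := chain_down hbij hgeo hv 0 1 one_ne_zero hg0 hA m
      simpa using this
    have hbase : Spi y ((1:ℝ)/2^m) = Spi 0 ((1:ℝ)/2^m) := by
      have := Spi_shift 0 ((1:ℝ)/2^m) nn
      rw [show (0:ℝ) + (1:ℝ)/2^m*nn = y by rw [hyval]; ring] at this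
      exact this
    have hfy : f '' Spi y ((1:ℝ)/2^m) = Spi y ((1:ℝ)/2^m) := by
      rw [hbase]; exact hf0
    have := chain_up hbij hgeo hv y ((1:ℝ)/2^m)
      (by positivity) hy hfy (b + m)
    rw [show (2:ℝ)^(b+m) * ((1:ℝ)/2^m) = 2^b by
      rw [pow_add]; field_simp] at this
    exact this
  · have hB : f '' Spi 0 (-1) = Spi 0 (-1) := B_fixed hbij hgeo hv h0 hA
    have hf0 : f '' Spi 0 (-(1:ℝ)/2^m) = Spi 0 (-(1:ℝ)/2^m) := by
      have := chain_down hbij hgeo hv 0 (-1) (by norm_num) hg0 hB m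
      rw [show (-1:ℝ)/2^m = -(1:ℝ)/2^m by ring] at this
      exact this
    have hbase : Spi y (-(1:ℝ)/2^m) = Spi 0 (-(1:ℝ)/2^m) := by
      have := Spi_shift 0 (-(1:ℝ)/2^m) (-nn)
      rw [show (0:ℝ) + (-(1:ℝ)/2^m)*(-nn:ℤ) = y by push_cast; rw [hyval]; ring] at this
      exact this
    have hfy : f '' Spi y (-(1:ℝ)/2^m) = Spi y (-(1:ℝ)/2^m) := by
      rw [hbase]; exact hf0
    have hne : -(1:ℝ)/2^m ≠ 0 := by
      have : (1:ℝ)/2^m > 0 := by positivity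
      intro h; rw [show -(1:ℝ)/2^m = -((1:ℝ)/2^m) by ring] at h; linarith
    have := chain_up hbij hgeo hv y (-(1:ℝ)/2^m) hne hy hfy (b + m)
    rw [show (2:ℝ)^(b+m) * (-(1:ℝ)/2^m) = -2^b by
      rw [pow_add]; field_simp] at this
    exact this
include hbij hgeo hv in
lemma pin (y0 y1 s t z μ : ℝ) (hst : s ≠ t)
    (hz : z = (s*y1 - t*y0)/(s-t)) (hμ : μ = s*t/(s-t))
    (hS0 : f '' Spi y0 s = Spi y0 s) (hS1 : f '' Spi y1 t = Spi y1 t) :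
    ∃ k : ℤ, gmap f z = z + μ*k := by
  have hd : s - t ≠ 0 := sub_ne_zero.mpr hst
  set x0 : ℝ := (y1 - y0)/(s-t) with hx0
  have hzx : z = s*x0 + y0 := by
    rw [hz, hx0]; field_simp; ring
  have hq0 : (((x0:AC), z) : Cyl) ∈ Spi y0 s ∩ Spi y1 t := by
    constructor
    · exact mem_Spi.mpr ⟨x0, by rw [Prod.ext_iff]; exact ⟨rfl, hzx⟩⟩
    · refine mem_Spi.mpr ⟨x0, ?_⟩
      rw [Prod.ext_iff]
      refine ⟨rfl, ?_⟩
      show z = t*x0 + y1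
      rw [hzx, hx0]
      field_simp
      ring
  have hfq0 : f ((x0:AC), z) ∈ Spi y0 s ∩ Spi y1 t := by
    rw [← hS0, ← hS1, ← img_inter hbij]
    exact ⟨_, hq0, rfl⟩
  obtain ⟨x1, hx1⟩ := mem_Spi.mp hfq0.1
  obtain ⟨x2, hx2⟩ := mem_Spi.mp hfq0.2
  have hfst : ((x1:ℝ):AC) = ((x2:ℝ):AC) := congrArg Prod.fst (hx1.symm.trans hx2)
  obtain ⟨k, hk⟩ := (coe_eq_coe _ _).mp hfst
  have hsnd : s*x1 + y0 = t*x2 + y1 := congrArg Prod.snd (hx1.symm.trans hx2)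
  have hheight : (f ((x0:AC), z)).2 = gmap f z := height_eq hbij hgeo hv _
  have hh2 : gmap f z = s*x1 + y0 := by
    rw [← hheight, hx1]
  have hx1eq : x1 = x0 + t*k/(s-t) := by
    rw [hk] at hsnd
    have : x1*(s-t) = y1 - y0 + t*k := by nlinarith [hsnd]
    rw [hx0]
    field_simp
    linarith
  refine ⟨k, ?_⟩
  rw [hh2, hx1eq, hzx, hμ]
  field_simp
  ring
  
include hbij hv in
lemma squeeze (z : ℝ) (h : ∀ b : ℕ, ∃ k : ℤ, gmap f z - z = 2^b * k) : gmap f z = z := by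
  by_contra hne
  have hc : gmap f z - z ≠ 0 := fun h' => hne (by linarith)
  obtain ⟨b, hb⟩ := pow_unbounded_of_one_lt |gmap f z - z| (by norm_num : (1:ℝ) < 2)
  obtain ⟨k, hk⟩ := h b
  have hk0 : k ≠ 0 := by
    intro h'
    rw [h'] at hk
    simp at hk
    exact hc hk
  have h1k : (1:ℝ) ≤ |(k:ℝ)| := by
    have := Int.one_le_abs hk0
    have : (1:ℤ) ≤ |k| := this
    calc (1:ℝ) ≤ (|k|:ℤ) := by exact_mod_cast this
      _ = |(k:ℝ)| := by push_cast; rfl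
  have hpow : (0:ℝ) < 2^b := by positivity
  have : (2:ℝ)^b ≤ |gmap f z - z| := by
    rw [hk, abs_mul, abs_of_pos hpow]
    nlinarith [h1k, hpow]
  linarith
  
def Good (f : Cyl → Cyl) (y : ℝ) : Prop :=
  gmap f y = y ∧ ∃ (m : ℕ) (nn : ℤ), y * 2^m = nn

include hbij hgeo hv h0 hA in
lemma good_refl {y0 y1 : ℝ} (hg0 : Good f y0) (hg1 : Good f y1) : Good f (2*y1 - y0) := by
  obtain ⟨hy0, m0, n0, hd0⟩ := hg0
  obtain ⟨hy1, m1, n1, hd1⟩ := hg1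
  constructor
  · apply squeeze hbij hv
    intro b
    have hS0 := (dyadic_spirals hbij hgeo hv h0 hA y0 hy0 m0 n0 hd0 (b+2)).1
    have hS1 := (dyadic_spirals hbij hgeo hv h0 hA y1 hy1 m1 n1 hd1 (b+1)).1
    have hst : ((2:ℝ)^(b+2)) ≠ (2:ℝ)^(b+1) := by
      have hp : (0:ℝ) < 2^(b+1) := by positivity
      have hsucc : (2:ℝ)^(b+2) = 2^(b+1)*2 := by ring
      intro h
      rw [hsucc] at h
      nlinarith
    obtain ⟨k, hk⟩ := pin hbij hgeo hv y0 y1 ((2:ℝ)^(b+2)) ((2:ℝ)^(b+1))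
      (2*y1 - y0) ((2:ℝ)^(b+2)) hst
      (by
        have hd : (2:ℝ)^(b+2) - 2^(b+1) = 2^(b+1) := by ring
        rw [hd]
        have h2 : ((2:ℝ)^(b+2)*y1 - 2^(b+1)*y0) = 2^(b+1)*(2*y1 - y0) := by ring
        rw [h2]
        field_simp)
      (by
        rw [show (2:ℝ)^(b+2) - 2^(b+1) = 2^(b+1) by ring]
        have hp : ((2:ℝ)^(b+1)) ≠ 0 := by positivity
        field_simp)
      hS0 hS1
    exact ⟨4*k, by rw [hk]; push_cast; ring⟩
  · refine ⟨m0 + m1, 2*n1*2^m0 - n0*2^m1, ?_⟩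
    push_cast
    linear_combination (-((2:ℝ)^m1))*hd0 + (2*(2:ℝ)^m0)*hd1

include hbij hgeo hv h0 hA in
lemma good_mid {y0 y1 : ℝ} (hg0 : Good f y0) (hg1 : Good f y1) : Good f ((y0 + y1)/2) := by
  obtain ⟨hy0, m0, n0, hd0⟩ := hg0
  obtain ⟨hy1, m1, n1, hd1⟩ := hg1
  constructor
  · apply squeeze hbij hv
    intro b
    have hS0 := (dyadic_spirals hbij hgeo hv h0 hA y0 hy0 m0 n0 hd0 (b+1)).1
    have hS1 := (dyadic_spirals hbij hgeo hv h0 hA y1 hy1 m1 n1 hd1 (b+1)).2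
    have hst : ((2:ℝ)^(b+1)) ≠ -(2:ℝ)^(b+1) := by
      have : (0:ℝ) < 2^(b+1) := by positivity
      intro h; linarith
    obtain ⟨k, hk⟩ := pin hbij hgeo hv y0 y1 ((2:ℝ)^(b+1)) (-(2:ℝ)^(b+1))
      ((y0 + y1)/2) (-(2:ℝ)^b) hst
      (by
        have hd : (2:ℝ)^(b+1) - (-(2:ℝ)^(b+1)) = 2*2^(b+1) := by ring
        rw [hd]
        have h2 : ((2:ℝ)^(b+1)*y1 - (-(2:ℝ)^(b+1))*y0) = 2^(b+1)*(y1 + y0) := by ring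
        rw [h2]
        have hp : ((2:ℝ)^(b+1)) ≠ 0 := by positivity
        field_simp
        ring)
      (by
        have hd : (2:ℝ)^(b+1) - (-(2:ℝ)^(b+1)) = 2*2^(b+1) := by ring
        rw [hd]
        have hp : ((2:ℝ)^(b+1)) ≠ 0 := by positivity
        field_simp
        ring)
      hS0 hS1
    exact ⟨-k, by rw [hk]; push_cast; ring⟩
  · refine ⟨m0 + m1 + 1, n0*2^m1 + n1*2^m0, ?_⟩
    push_cast
    linear_combination ((2:ℝ)^m1)*hd0 + ((2:ℝ)^m0)*hd1
include hbij hv h0 in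
lemma good_zero : Good f 0 :=
  ⟨g_zero hbij hv h0, 0, 0, by norm_num⟩

include hbij hv h1 in
lemma good_one : Good f 1 :=
  ⟨g_one hbij hv h1, 0, 1, by norm_num⟩

include hbij hgeo hv h0 h1 hA in
lemma good_int : ∀ n : ℤ, Good f (n:ℝ) := by
  have hnat : ∀ n : ℕ, Good f (n:ℝ) ∧ Good f ((n:ℝ)+1) := by
    intro n
    induction n with
    | zero => exact ⟨by simpa using good_zero hbij hv h0, by simpa using good_one hbij hv h1⟩
    | succ n ih =>
      refine ⟨by push_cast; exact ih.2, ?_⟩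
      have := good_refl hbij hgeo hv h0 hA ih.1 ih.2
      rw [show 2*((n:ℝ)+1) - n = ((n:ℝ)+1)+1 by ring] at this
      push_cast
      exact this
  have hneg : ∀ n : ℕ, Good f (-(n:ℝ)) ∧ Good f (-(n:ℝ)+1) := by
    intro n
    induction n with
    | zero => exact ⟨by simpa using good_zero hbij hv h0, by simpa using good_one hbij hv h1⟩
    | succ n ih =>
      refine ⟨?_, by push_cast; rw [show -((n:ℝ)+1)+1 = -(n:ℝ) by ring]; exact ih.1⟩
      have := good_refl hbij hgeo hv h0 hA ih.2 ih.1
      rw [show 2*(-(n:ℝ)) - (-(n:ℝ)+1) = -((n:ℝ)+1) by ring] at this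
      push_cast
      exact this
  intro n
  obtain ⟨m, rfl | rfl⟩ := Int.eq_nat_or_neg n
  · exact_mod_cast (hnat m).1
  · exact_mod_cast (hneg m).1

include hbij hgeo hv h0 h1 hA in
lemma good_dyadic : ∀ (m : ℕ) (n : ℤ), Good f ((n:ℝ)/2^m) := by
  intro m
  induction m with
  | zero => intro n; simpa using good_int hbij hgeo hv h0 h1 hA n
  | succ m ih =>
    intro n
    rcases Int.even_or_odd n with ⟨k, hk⟩ | ⟨k, hk⟩
    · rw [hk]
      rw [show ((k + k : ℤ):ℝ)/2^(m+1) = (k:ℝ)/2^m by push_cast; rw [pow_succ]; field_simp; ring]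
      exact ih k
    · rw [hk]
      have := good_mid hbij hgeo hv h0 hA (ih k) (ih (k+1))
      rw [show ((k:ℝ)/2^m + ((k+1:ℤ):ℝ)/2^m)/2 = ((2*k+1 : ℤ):ℝ)/2^(m+1) by
        push_cast; rw [pow_succ]; field_simp; ring] at this
      exact this

include hbij hgeo hv h0 h1 hA in
lemma main_fixed_of_A : ∀ (n : ℤ) (m : ℕ),
    f (cylπ (0, (n:ℝ)/2^m)) = cylπ (0, (n:ℝ)/2^m) := by
  intro n m
  have hg := (good_dyadic hbij hgeo hv h0 h1 hA m n).1
  have : f (((0:ℝ):AC), (n:ℝ)/2^m) = (((0:ℝ):AC), gmap f ((n:ℝ)/2^m)) :=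
    f_vpt hbij hv _
  rw [hg] at this
  exact this
lemma trace_neg (y s : ℝ) : Spi y (-s) ∩ Vset = Spi y s ∩ Vset := by
  rw [Spi_inter_V, Spi_inter_V]
  ext q
  constructor
  · rintro ⟨k, rfl⟩; exact ⟨-k, by push_cast; ring_nf⟩
  · rintro ⟨k, rfl⟩; exact ⟨-k, by push_cast; ring_nf⟩

include hbij hgeo hv h0 in
lemma trace_unit (σ : ℝ) (hσ : σ ≠ 0) (himg : f '' Spi 0 1 = Spi 0 σ)
    (j : ℤ) (w : ℝ) (hw : gmap f (j:ℝ) = w) (hwσ : w = σ ∨ w = -σ) :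
    j = 1 ∨ j = -1 := by
  have hw0 : w ≠ 0 := by
    rcases hwσ with rfl | rfl
    · exact hσ
    · simpa using hσ
  have hj0 : (j:ℝ) ≠ 0 := by
    intro h
    rw [h, g_zero hbij hv h0] at hw
    exact hw0 hw.symm
  obtain ⟨τ, hτ, himgj⟩ := spiral_image hbij hgeo hv 0 (j:ℝ) hj0
  rw [g_zero hbij hv h0] at himgj
  have htr : f '' (Spi 0 1 ∩ Vset) = Spi 0 σ ∩ Vset := by rw [img_inter hbij, himg, hv]
  have htrj : f '' (Spi 0 (j:ℝ) ∩ Vset) = Spi 0 τ ∩ Vset := by rw [img_inter hbij, himgj, hv]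
  have hsub : Spi 0 (j:ℝ) ∩ Vset ⊆ Spi 0 1 ∩ Vset := by
    rintro q ⟨hq, hqv⟩
    obtain ⟨r, rfl⟩ := mem_Vset.mp hqv
    obtain ⟨k, hk⟩ := mem_Spi_vpt.mp hq
    exact ⟨mem_Spi_vpt.mpr ⟨j*k, by rw [hk]; push_cast; ring⟩, hqv⟩
  have hsub2 : Spi 0 τ ∩ Vset ⊆ Spi 0 σ ∩ Vset := by
    rw [← htrj, ← htr]; exact Set.image_mono hsub
  have hmτ : ((((0:ℝ):AC), (0:ℝ) + τ*((1:ℤ):ℝ)) : Cyl) ∈ Spi 0 τ ∩ Vset :=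
    ⟨mem_Spi_vpt.mpr ⟨1, rfl⟩, vpt_mem_Vset _⟩
  obtain ⟨u, hu⟩ := mem_Spi_vpt.mp (hsub2 hmτ).1
  have hτσ : τ = σ*u := by push_cast at hu; linarith
  have hmw : ((((0:ℝ):AC), w) : Cyl) ∈ Spi 0 τ ∩ Vset := by
    rw [← htrj]
    refine ⟨((((0:ℝ):AC), (j:ℝ)) : Cyl), ⟨mem_Spi_vpt.mpr ⟨1, by push_cast; ring⟩, vpt_mem_Vset _⟩, ?_⟩
    rw [f_vpt hbij hv, hw]
  obtain ⟨p, hp⟩ := mem_Spi_vpt.mp hmw.1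
  have hwτp : w = τ*p := by linarith
  have hup : u*p = 1 ∨ u*p = -1 := by
    rcases hwσ with hcase | hcase
    · left
      have hh : σ*((u:ℝ)*(p:ℝ)) = σ*1 := by
        rw [mul_one]
        calc σ*((u:ℝ)*(p:ℝ)) = (σ*(u:ℝ))*(p:ℝ) := by ring
          _ = τ*(p:ℝ) := by rw [← hτσ]
          _ = σ := by rw [← hwτp, hcase]
      have h2 := mul_left_cancel₀ hσ hh
      have h3 : ((u*p : ℤ):ℝ) = 1 := by push_cast; linarith [h2]
      exact_mod_cast h3
    · right
      have hh : σ*((u:ℝ)*(p:ℝ)) = σ*(-1) := by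
        calc σ*((u:ℝ)*(p:ℝ)) = (σ*(u:ℝ))*(p:ℝ) := by ring
          _ = τ*(p:ℝ) := by rw [← hτσ]
          _ = -σ := by rw [← hwτp, hcase]
          _ = σ*(-1) := by ring
      have h2 := mul_left_cancel₀ hσ hh
      have h3 : ((u*p : ℤ):ℝ) = -1 := by push_cast; linarith [h2]
      exact_mod_cast h3
  have huu : u = 1 ∨ u = -1 := by
    rcases hup with h | h
    · exact Int.isUnit_iff.mp (IsUnit.of_mul_eq_one _ h)
    · exact Int.isUnit_iff.mp (IsUnit.of_mul_eq_one (-p) (by linarith [h]))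
  have htreq : Spi 0 τ ∩ Vset = Spi 0 σ ∩ Vset := by
    rcases huu with h | h
    · rw [hτσ, h]; push_cast; rw [mul_one]
    · rw [hτσ, h]
      push_cast
      rw [show σ*(-1:ℝ) = -σ by ring]
      exact trace_neg 0 σ
  have hSjS1 : Spi 0 (j:ℝ) ∩ Vset = Spi 0 1 ∩ Vset := by
    apply img_inj hbij
    rw [htrj, htr, htreq]
  have hm1 : ((((0:ℝ):AC), (0:ℝ) + 1*((1:ℤ):ℝ)) : Cyl) ∈ Spi 0 (j:ℝ) ∩ Vset := by
    rw [hSjS1]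
    exact ⟨mem_Spi_vpt.mpr ⟨1, rfl⟩, vpt_mem_Vset _⟩
  obtain ⟨q, hq⟩ := mem_Spi_vpt.mp hm1.1
  have hjq : j*q = 1 := by
    have : ((j*q : ℤ):ℝ) = 1 := by push_cast at hq ⊢; linarith
    exact_mod_cast this
  exact Int.isUnit_iff.mp (IsUnit.of_mul_eq_one _ hjq)

include hbij hgeo hv h0 h1 in
lemma A_or_B : f '' Spi 0 1 = Spi 0 1 ∨ f '' Spi 0 1 = Spi 0 (-1) := by
  obtain ⟨σ, hσ, himg⟩ := spiral_image hbij hgeo hv 0 1 one_ne_zero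
  rw [g_zero hbij hv h0] at himg
  have hg1 : gmap f 1 = 1 := g_one hbij hv h1
  have htr : f '' (Spi 0 1 ∩ Vset) = Spi 0 σ ∩ Vset := by rw [img_inter hbij, himg, hv]
  have hm1 : ((((0:ℝ):AC), (1:ℝ)) : Cyl) ∈ Spi 0 σ ∩ Vset := by
    rw [← htr]
    refine ⟨((((0:ℝ):AC), (1:ℝ)) : Cyl), ⟨mem_Spi_vpt.mpr ⟨1, by push_cast; ring⟩, vpt_mem_Vset _⟩, ?_⟩
    rw [f_vpt hbij hv, hg1]
  obtain ⟨k1, hk1⟩ := mem_Spi_vpt.mp hm1.1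
  have hσk1 : σ*(k1:ℝ) = 1 := by linarith
  by_cases hk : k1 = 1 ∨ k1 = -1
  · rcases hk with h | h
    · left
      rw [h] at hσk1
      push_cast at hσk1
      rw [himg, show σ = 1 by linarith]
    · right
      rw [h] at hσk1
      push_cast at hσk1
      rw [himg, show σ = -1 by linarith]
  · exfalso
    push_neg at hk
    have hσ1 : σ ≠ 1 := by
      intro h
      rw [h] at hσk1
      exact hk.1 (by exact_mod_cast (by linarith : (k1:ℝ) = 1))
    have hσm1 : σ ≠ -1 := by
      intro h
      rw [h] at hσk1
      exact hk.2 (by exact_mod_cast (by linarith : (k1:ℝ) = -1))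
    -- find j with gmap f j = σ
    have hmσ : ((((0:ℝ):AC), (0:ℝ) + σ*((1:ℤ):ℝ)) : Cyl) ∈ Spi 0 σ ∩ Vset :=
      ⟨mem_Spi_vpt.mpr ⟨1, rfl⟩, vpt_mem_Vset _⟩
    rw [← htr] at hmσ
    obtain ⟨q, ⟨hq1, hqv⟩, hfq⟩ := hmσ
    obtain ⟨r, rfl⟩ := mem_Vset.mp hqv
    obtain ⟨j, hj⟩ := mem_Spi_vpt.mp hq1
    have hrj : r = (j:ℝ) := by push_cast at hj; linarith
    subst hrj
    have hgj : gmap f (j:ℝ) = σ := by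
      have := f_vpt hbij hv (j:ℝ)
      rw [this] at hfq
      have := congrArg Prod.snd hfq
      simpa using this
    have hj1 := trace_unit hbij hgeo hv h0 σ hσ himg j σ hgj (Or.inl rfl)
    have hjm1 : j = -1 := by
      rcases hj1 with h | h
      · exfalso
        rw [h] at hgj
        push_cast at hgj
        rw [hg1] at hgj
        exact hσ1 hgj.symm
      · exact h
    -- find j' with gmap f j' = -σ
    have hmσ' : ((((0:ℝ):AC), (0:ℝ) + σ*((-1:ℤ):ℝ)) : Cyl) ∈ Spi 0 σ ∩ Vset :=
      ⟨mem_Spi_vpt.mpr ⟨-1, rfl⟩, vpt_mem_Vset _⟩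
    rw [← htr] at hmσ'
    obtain ⟨q', ⟨hq1', hqv'⟩, hfq'⟩ := hmσ'
    obtain ⟨r', rfl⟩ := mem_Vset.mp hqv'
    obtain ⟨j', hj'⟩ := mem_Spi_vpt.mp hq1'
    have hrj' : r' = (j':ℝ) := by push_cast at hj'; linarith
    subst hrj'
    have hgj' : gmap f (j':ℝ) = -σ := by
      have := f_vpt hbij hv (j':ℝ)
      rw [this] at hfq'
      have := congrArg Prod.snd hfq'
      push_cast at this
      linarith [this]
    have hj1' := trace_unit hbij hgeo hv h0 σ hσ himg j' (-σ) hgj' (Or.inr rfl)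
    have hjm1' : j' = -1 := by
      rcases hj1' with h | h
      · exfalso
        rw [h] at hgj'
        push_cast at hgj'
        rw [hg1] at hgj'
        exact hσm1 (by linarith)
      · exact h
    rw [hjm1] at hgj
    rw [hjm1'] at hgj'
    have : σ = -σ := hgj.symm.trans hgj'
    exact hσ (by linarith)
end Main

lemma coe_zero_ac : ((0:ℝ):AC) = (0:AC) := by
  norm_cast

def Rflip : Cyl → Cyl := fun q => (-q.1, q.2)

lemma Rflip_invol : Function.Involutive Rflip := by
  intro q; simp [Rflip]

lemma Rflip_bij : Function.Bijective Rflip := Rflip_invol.bijective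

lemma Rflip_coe (x y : ℝ) : Rflip ((x:AC), y) = (((-x : ℝ):AC), y) := by
  simp [Rflip, AddCircle.coe_neg]

lemma Rflip_vpt (r : ℝ) : Rflip (((0:ℝ):AC), r) = (((0:ℝ):AC), r) := by
  rw [Rflip_coe]
  norm_num

lemma Rflip_geo {G : Set Cyl} (h : IsCylGeodesic G) : IsCylGeodesic (Rflip '' G) := by
  obtain ⟨L, ⟨p, w, hw, rfl⟩, rfl⟩ := h
  refine ⟨{x | ∃ t : ℝ, x = (-p.1, p.2) + t • (-w.1, w.2)}, ⟨(-p.1, p.2), (-w.1, w.2), ?_, rfl⟩, ?_⟩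
  · intro hc
    apply hw
    have h1 : -w.1 = 0 := congrArg Prod.fst hc
    have h2 : w.2 = 0 := congrArg Prod.snd hc
    have : w.1 = 0 := by linarith
    exact Prod.ext this h2
  · ext q
    constructor
    · rintro ⟨q', ⟨x, ⟨t, rfl⟩, rfl⟩, rfl⟩
      refine ⟨(-p.1, p.2) + t • (-w.1, w.2), ⟨t, rfl⟩, ?_⟩
      symm
      have e1 : cylπ (p + t • w) = (((p.1 + t*w.1 : ℝ):AC), p.2 + t*w.2) := by
        simp [cylπ, Prod.ext_iff]
      have e2 : cylπ ((-p.1, p.2) + t • (-w.1, w.2)) = (((-p.1 + t*(-w.1) : ℝ):AC), p.2 + t*w.2) := by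
        simp [cylπ, Prod.ext_iff]
      rw [e1, e2, Rflip_coe]
      rw [Prod.ext_iff]
      constructor
      · exact congrArg (fun r : ℝ => ((r:AC))) (by ring)
      · rfl
    · rintro ⟨x, ⟨t, rfl⟩, rfl⟩
      refine ⟨cylπ (p + t • w), ⟨p + t • w, ⟨t, rfl⟩, rfl⟩, ?_⟩
      have e1 : cylπ (p + t • w) = (((p.1 + t*w.1 : ℝ):AC), p.2 + t*w.2) := by
        simp [cylπ, Prod.ext_iff]
      have e2 : cylπ ((-p.1, p.2) + t • (-w.1, w.2)) = (((-p.1 + t*(-w.1) : ℝ):AC), p.2 + t*w.2) := by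
        simp [cylπ, Prod.ext_iff]
      symm
      rw [e1, e2, Rflip_coe]
      rw [Prod.ext_iff]
      constructor
      · exact congrArg (fun r : ℝ => ((r:AC))) (by ring)
      · rfl

lemma Rflip_V : Rflip '' Vset = Vset := by
  ext q
  constructor
  · rintro ⟨q', hq', rfl⟩
    obtain ⟨r, rfl⟩ := mem_Vset.mp hq'
    rw [Rflip_vpt]
    exact vpt_mem_Vset r
  · intro hq
    obtain ⟨r, rfl⟩ := mem_Vset.mp hq
    exact ⟨(((0:ℝ):AC), r), vpt_mem_Vset r, Rflip_vpt r⟩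

lemma Rflip_Spi (y s : ℝ) : Rflip '' Spi y s = Spi y (-s) := by
  ext q
  constructor
  · rintro ⟨q', hq', rfl⟩
    obtain ⟨x, rfl⟩ := mem_Spi.mp hq'
    rw [Rflip_coe]
    refine mem_Spi.mpr ⟨-x, ?_⟩
    rw [Prod.ext_iff]
    exact ⟨rfl, by show s*x + y = -s*(-x) + y; ring⟩
  · intro hq
    obtain ⟨x, rfl⟩ := mem_Spi.mp hq
    refine ⟨(((-x:ℝ):AC), s*(-x) + y), mem_Spi.mpr ⟨-x, rfl⟩, ?_⟩
    rw [Rflip_coe]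
    rw [Prod.ext_iff]
    constructor
    · show ((-(-x):ℝ):AC) = ((x:ℝ):AC)
      norm_num
    · show s*(-x) + y = -s*x + y
      ring

end CylAux

open CylAux in
theorem cylinder_dyadic_fixed' (f : Cyl → Cyl)
    (hbij : Function.Bijective f)
    (hgeo : ∀ G : Set Cyl, IsCylGeodesic G → IsCylGeodesic (f '' G))
    (h0 : f (cylπ (0, 0)) = cylπ (0, 0))
    (h1 : f (cylπ (0, 1)) = cylπ (0, 1))
    (hv : f '' (cylπ '' (({0} : Set ℝ) ×ˢ (Set.univ : Set ℝ))) =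
      cylπ '' (({0} : Set ℝ) ×ˢ (Set.univ : Set ℝ))) :
    ∀ (n : ℤ) (m : ℕ), f (cylπ (0, (n : ℝ) / 2 ^ m)) = cylπ (0, (n : ℝ) / 2 ^ m) := by
  have hvv : f '' Vset = Vset := hv
  rcases A_or_B hbij hgeo hvv h0 h1 with hA | hB
  · exact main_fixed_of_A hbij hgeo hvv h0 h1 hA
  · set F : Cyl → Cyl := Rflip ∘ f with hF
    have hFbij : Function.Bijective F := Rflip_bij.comp hbij
    have hFimg : ∀ S : Set Cyl, F '' S = Rflip '' (f '' S) := by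
      intro S
      rw [hF, Set.image_comp]
    have hFgeo : ∀ G : Set Cyl, IsCylGeodesic G → IsCylGeodesic (F '' G) := by
      intro G hG
      rw [hFimg]
      exact Rflip_geo (hgeo G hG)
    have hF0 : F (cylπ (0, 0)) = cylπ (0, 0) := by
      show Rflip (f (cylπ (0,0))) = cylπ (0,0)
      rw [h0]
      exact Rflip_vpt 0
    have hF1 : F (cylπ (0, 1)) = cylπ (0, 1) := by
      show Rflip (f (cylπ (0,1))) = cylπ (0,1)
      rw [h1]
      exact Rflip_vpt 1
    have hFv : F '' Vset = Vset := by
      rw [hFimg, hvv, Rflip_V]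
    have hFA : F '' Spi 0 1 = Spi 0 1 := by
      rw [hFimg, hB, Rflip_Spi]
      norm_num
    have hmain := main_fixed_of_A hFbij hFgeo hFv hF0 hF1 hFA
    intro n m
    have := hmain n m
    have h2 : Rflip (f (cylπ (0, (n:ℝ)/2^m))) = cylπ (0, (n:ℝ)/2^m) := this
    have h3 := congrArg Rflip h2
    rw [Rflip_invol _] at h3
    rw [h3]
    exact Rflip_vpt _

/-- A geodesic-preserving bijection of the cylinder fixing `π(0,0)`, `π(0,1)` and the vertical
geodesic `v = π({0} × ℝ)` setwise fixes every point of `v` of dyadic rational height. -/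
theorem cylinder_dyadic_fixed (f : Cyl → Cyl)
    (hbij : Function.Bijective f)
    (hgeo : ∀ G : Set Cyl, IsCylGeodesic G → IsCylGeodesic (f '' G))
    (h0 : f (cylπ (0, 0)) = cylπ (0, 0))
    (h1 : f (cylπ (0, 1)) = cylπ (0, 1))
    (hv : f '' (cylπ '' (({0} : Set ℝ) ×ˢ (Set.univ : Set ℝ))) =
      cylπ '' (({0} : Set ℝ) ×ˢ (Set.univ : Set ℝ))) :
    ∀ (n : ℤ) (m : ℕ), f (cylπ (0, (n : ℝ) / 2 ^ m)) = cylπ (0, (n : ℝ) / 2 ^ m) := by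
  exact cylinder_dyadic_fixed' f hbij hgeo h0 h1 hv
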